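/- arXiv:2409.12484 — 3 statements merged into one kernel-verified Lean document; each statement's English description precedes it below -/
import Mathlib

section
/- Baer trick: Let G be a finite group of odd order with [G,G] ≤ Z(G), and let k be a natural number such that x^(2k) = x for all x in G (such k exists since squaring is bijective on a group of odd exponent dividing |G|). Define x*y := x·y·[y,x]^k where [y,x] = y⁻¹x⁻¹yx. Then (G,*) is an abelian group. -/
private def cmB {G : Type*} [Group G] (a b : G) : G := a⁻¹ * b⁻¹ * a * b

private lemma cmB_inv {G : Type*} [Group G] (a b : G) : cmB b a = (cmB a b)⁻¹ := by
  unfold cmB; group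

private lemma mul_eq_cmB {G : Type*} [Group G] (a b : G) : a * b = b * a * cmB a b := by
  unfold cmB; group

private lemma cmB_mul_left {G : Type*} [Group G]
    (hc : ∀ x y g : G, Commute (cmB x y) g) (a b c : G) :
    cmB (a * b) c = cmB a c * cmB b c := by
  have e : cmB a c * b⁻¹ = b⁻¹ * cmB a c := (hc a c b⁻¹).eq
  calc cmB (a * b) c = b⁻¹ * cmB a c * c⁻¹ * b * c := by unfold cmB; group
    _ = cmB a c * b⁻¹ * c⁻¹ * b * c := by rw [← e]
    _ = cmB a c * cmB b c := by unfold cmB; group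

private lemma cmB_mul_right {G : Type*} [Group G]
    (hc : ∀ x y g : G, Commute (cmB x y) g) (a b c : G) :
    cmB a (b * c) = cmB a b * cmB a c := by
  have e : cmB a b * c = c * cmB a b := (hc a b c).eq
  calc cmB a (b * c) = a⁻¹ * c⁻¹ * a * (cmB a b * c) := by unfold cmB; group
    _ = a⁻¹ * c⁻¹ * a * (c * cmB a b) := by rw [e]
    _ = cmB a c * cmB a b := by unfold cmB; group
    _ = cmB a b * cmB a c := (hc a b (cmB a c)).eq.symm

private lemma cmB_central_right {G : Type*} [Group G] (a v : G)
    (hv : ∀ g : G, Commute v g) : cmB a v = 1 := by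
  have e : v * a = a * v := (hv a).eq
  unfold cmB
  calc a⁻¹ * v⁻¹ * a * v = a⁻¹ * v⁻¹ * (a * v) := by group
    _ = a⁻¹ * v⁻¹ * (v * a) := by rw [← e]
    _ = 1 := by group

private lemma cmB_central_left {G : Type*} [Group G] (a v : G)
    (hv : ∀ g : G, Commute v g) : cmB v a = 1 := by
  rw [cmB_inv, cmB_central_right a v hv, inv_one]

open scoped commutatorElement

/-- Baer trick: if `G` is a finite group of odd order with `[G,G] ≤ Z(G)` and
`x^(2k) = x` for all `x`, then `x*y := x·y·[y,x]^k` (with `[y,x] = y⁻¹x⁻¹yx`)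
makes `G` an abelian group. -/
theorem baer_trick (G : Type*) [Group G] [Finite G]
    (hodd : Odd (Nat.card G))
    (hnil : commutator G ≤ Subgroup.center G)
    (k : ℕ) (hk : ∀ x : G, x ^ (2 * k) = x)
    (star : G → G → G)
    (hstar : ∀ x y : G, star x y = x * y * (y⁻¹ * x⁻¹ * y * x) ^ k) :
    (∀ x y z : G, star (star x y) z = star x (star y z)) ∧
    (∀ x y : G, star x y = star y x) ∧
    (∀ x : G, star x 1 = x ∧ star 1 x = x) ∧
    (∀ x : G, ∃ y : G, star x y = 1 ∧ star y x = 1) := by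
  -- commutators are central
  have hc : ∀ x y g : G, Commute (cmB x y) g := by
    intro x y g
    have hx : cmB x y = ⁅x⁻¹, y⁻¹⁆ := by unfold cmB; rw [commutatorElement_def]; group
    have hmem : ⁅x⁻¹, y⁻¹⁆ ∈ commutator G := by
      rw [commutator_def]
      exact Subgroup.commutator_mem_commutator (Subgroup.mem_top _) (Subgroup.mem_top _)
    have hcen := hnil hmem
    rw [Subgroup.mem_center_iff] at hcen
    rw [hx]
    exact (hcen g).symm
  have hstar' : ∀ x y : G, star x y = x * y * (cmB y x) ^ k := by
    intro x y; rw [hstar]; rfl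
  have hcp : ∀ x y : G, ∀ g : G, Commute ((cmB x y) ^ k) g :=
    fun x y g => (hc x y g).pow_left k
  refine ⟨?_, ?_, ?_, ?_⟩
  · -- associativity
    intro x y z
    have hP : ∀ g : G, Commute ((cmB y x) ^ k) g := hcp y x
    have hQ : ∀ g : G, Commute ((cmB z y) ^ k) g := hcp z y
    have lhs1 : cmB z (x * y * (cmB y x) ^ k) = cmB z x * cmB z y := by
      rw [cmB_mul_right hc, cmB_mul_right hc, cmB_central_right z _ hP, mul_one]
    have rhs1 : cmB (y * z * (cmB z y) ^ k) x = cmB y x * cmB z x := by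
      rw [cmB_mul_left hc, cmB_mul_left hc, cmB_central_left x _ hQ, mul_one]
    rw [hstar', hstar', hstar', hstar', lhs1, rhs1]
    rw [(hc z x (cmB z y)).mul_pow, (hc y x (cmB z x)).mul_pow]
    -- both sides: x*y*z*(products of central powers)
    have e1 : (cmB y x) ^ k * z = z * (cmB y x) ^ k := (hP z).eq
    have e2 : (cmB z y) ^ k * ((cmB y x) ^ k * (cmB z x) ^ k)
        = (cmB y x) ^ k * (cmB z x) ^ k * (cmB z y) ^ k :=
      (((hP ((cmB z y) ^ k)).mul_left (hcp z x ((cmB z y) ^ k))).eq).symm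
    calc x * y * (cmB y x) ^ k * z * ((cmB z x) ^ k * (cmB z y) ^ k)
        = x * y * ((cmB y x) ^ k * z) * ((cmB z x) ^ k * (cmB z y) ^ k) := by
          simp [mul_assoc]
      _ = x * y * (z * (cmB y x) ^ k) * ((cmB z x) ^ k * (cmB z y) ^ k) := by rw [e1]
      _ = x * (y * z) * ((cmB y x) ^ k * (cmB z x) ^ k * (cmB z y) ^ k) := by
          simp [mul_assoc]
      _ = x * (y * z) * ((cmB z y) ^ k * ((cmB y x) ^ k * (cmB z x) ^ k)) := by rw [e2]
      _ = x * (y * z * (cmB z y) ^ k) * ((cmB y x) ^ k * (cmB z x) ^ k) := by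
          simp [mul_assoc]
  · -- commutativity
    intro x y
    rw [hstar', hstar']
    have h1 : x * y = y * x * cmB x y := mul_eq_cmB x y
    have h2 : (cmB y x) ^ k = ((cmB x y) ^ k)⁻¹ := by rw [cmB_inv]; group
    have h3 : cmB x y * ((cmB x y) ^ k)⁻¹ = (cmB x y) ^ k := by
      have : (cmB x y) ^ k * (cmB x y) ^ k = cmB x y := by
        rw [← pow_add]
        have : k + k = 2 * k := by ring
        rw [this, hk]
      rw [mul_inv_eq_iff_eq_mul]; exact this.symm
    rw [h1, h2, mul_assoc, h3]
  · -- identity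
    intro x
    constructor
    · rw [hstar']
      have : cmB 1 x = 1 := by unfold cmB; group
      rw [this, one_pow, mul_one, mul_one]
    · rw [hstar']
      have : cmB x 1 = 1 := by unfold cmB; group
      rw [this, one_pow, mul_one, one_mul]
  · -- inverses
    intro x
    refine ⟨x⁻¹, ?_, ?_⟩
    · rw [hstar']
      have : cmB x⁻¹ x = 1 := by unfold cmB; group
      rw [this, one_pow, mul_one, mul_inv_cancel]
    · rw [hstar']
      have : cmB x x⁻¹ = 1 := by unfold cmB; group
      rw [this, one_pow, mul_one, inv_mul_cancel]
end

section
/- Let G be a group with [G,G] ≤ Z(G), let c be an integer, and define x*y := x·y·[x,y]^c. Then * is associative and (G,*) with identity 1 and inverse x⁻¹·[x,x⁻¹]^(-c) (equivalently, the *-inverse of x) is a group. -/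
/-- In a group with `[G,G] ≤ Z(G)`, for any integer `c` the operation
`x*y := x·y·[x,y]^c` is associative, has identity `1`, and every element has a
two-sided inverse `x⁻¹·[x,x⁻¹]^(-c)`; hence `(G,*)` is a group. -/
theorem star_group_two_nilpotent (G : Type*) [Group G]
    (hnil : commutator G ≤ Subgroup.center G)
    (c : ℤ) (br : G → G → G) (hbr : ∀ x y : G, br x y = x⁻¹ * y⁻¹ * x * y)
    (star : G → G → G)
    (hstar : ∀ x y : G, star x y = x * y * (br x y) ^ c) :
    (∀ x y z : G, star (star x y) z = star x (star y z)) ∧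
    (∀ x : G, star x 1 = x ∧ star 1 x = x) ∧
    (∀ x : G, star x (x⁻¹ * (br x x⁻¹) ^ (-c)) = 1 ∧
      star (x⁻¹ * (br x x⁻¹) ^ (-c)) x = 1) := by
  -- commutators are central
  have hcomm : ∀ a b g : G, Commute (br a b) g := by
    intro a b g
    have hmem : br a b ∈ commutator G := by
      have := Subgroup.commutator_mem_commutator (Subgroup.mem_top a⁻¹) (Subgroup.mem_top b⁻¹)
      simpa [commutator_def, hbr, commutatorElement_def, mul_assoc] using this
    have := Subgroup.mem_center_iff.mp (hnil hmem) g
    exact this.symm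
  have hpowcomm : ∀ a b g : G, Commute ((br a b) ^ c) g := fun a b g =>
    (hcomm a b g).zpow_left c
  -- br of a central element is 1
  have hone_left : ∀ (w z : G), (∀ g, Commute w g) → br w z = 1 := by
    intro w z hw
    rw [hbr]
    rw [((hw z⁻¹).inv_left).eq]
    group
  have hone_right : ∀ (a w : G), (∀ g, Commute w g) → br a w = 1 := by
    intro a w hw
    rw [hbr, mul_assoc a⁻¹ w⁻¹ a]
    rw [((hw a).inv_left).eq]
    group
  -- bilinearity
  have hL : ∀ a b z : G, br (a * b) z = br a z * br b z := by
    intro a b z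
    have h1 : br (a * b) z = b⁻¹ * br a z * (z⁻¹ * b * z) := by
      rw [hbr, hbr]; group
    calc br (a * b) z = b⁻¹ * br a z * (z⁻¹ * b * z) := h1
      _ = br a z * b⁻¹ * (z⁻¹ * b * z) := by rw [← (hcomm a z b⁻¹).eq]
      _ = br a z * br b z := by rw [hbr b z]; group
  have hR : ∀ a b z : G, br a (b * z) = br a b * br a z := by
    intro a b z
    calc br a (b * z) = a⁻¹ * z⁻¹ * a * br a b * z := by rw [hbr, hbr]; group
      _ = br a b * (a⁻¹ * z⁻¹ * a) * z := by rw [← (hcomm a b (a⁻¹ * z⁻¹ * a)).eq]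
      _ = br a b * br a z := by rw [hbr a z]; group
  refine ⟨?_, ?_, ?_⟩
  · intro x y z
    have hA : br (x * y * (br x y) ^ c) z = br x z * br y z := by
      rw [hL, hL, hone_left _ z (hpowcomm x y), mul_one]
    have hB : br x (y * z * (br y z) ^ c) = br x y * br x z := by
      rw [hR, hR, hone_right x _ (hpowcomm y z), mul_one]
    rw [hstar, hstar, hstar, hstar, hA, hB]
    rw [(Commute.mul_zpow (hcomm x z (br y z)) c)]
    rw [(Commute.mul_zpow (hcomm x y (br x z)) c)]
    -- now pure juggling of central powers
    calc x * y * (br x y) ^ c * z * ((br x z) ^ c * (br y z) ^ c)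
        = x * y * ((br x y) ^ c * z) * ((br x z) ^ c * (br y z) ^ c) := by group
      _ = x * y * (z * (br x y) ^ c) * ((br x z) ^ c * (br y z) ^ c) := by
          rw [(hpowcomm x y z).eq]
      _ = x * (y * z) * ((br x y) ^ c * ((br x z) ^ c * (br y z) ^ c)) := by group
      _ = x * (y * z) * ((br y z) ^ c * ((br x y) ^ c * (br x z) ^ c)) := by
          rw [← mul_assoc ((br x y) ^ c), ← (hpowcomm y z _).eq, mul_assoc]
      _ = x * (y * z * (br y z) ^ c) * ((br x y) ^ c * (br x z) ^ c) := by group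
  · intro x
    constructor
    · rw [hstar, hbr]
      have : x⁻¹ * (1 : G)⁻¹ * x * 1 = 1 := by group
      rw [this]; group
    · rw [hstar, hbr]
      have : (1 : G)⁻¹ * x⁻¹ * 1 * x = 1 := by group
      rw [this]; group
  · intro x
    have h1 : br x x⁻¹ = 1 := by rw [hbr]; group
    have h2 : br x⁻¹ x = 1 := by rw [hbr]; group
    constructor
    · rw [h1, one_zpow, mul_one, hstar, h1, one_zpow, mul_one, mul_inv_cancel]
    · rw [h1, one_zpow, mul_one, hstar, h2, one_zpow, mul_one, inv_mul_cancel]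
end

section
/- Let G be a group with [G,G] ≤ Z(G), let c be an integer, and define x*y := x·y·[x,y]^c. Then (G,*) is commutative if and only if [x,y]^(2c+1) = 1 for all x,y ∈ G. -/
/-- In a group with `[G,G] ≤ Z(G)`, the operation `x*y := x·y·[x,y]^c` is
commutative iff `[x,y]^(2c+1) = 1` for all `x,y`. -/
theorem star_commutative_iff (G : Type*) [Group G]
    (hnil : commutator G ≤ Subgroup.center G)
    (c : ℤ) (br : G → G → G) (hbr : ∀ x y : G, br x y = x⁻¹ * y⁻¹ * x * y)
    (star : G → G → G)
    (hstar : ∀ x y : G, star x y = x * y * (br x y) ^ c) :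
    (∀ x y : G, star x y = star y x) ↔ (∀ x y : G, (br x y) ^ (2 * c + 1) = 1) := by
  have key : ∀ x y : G, star x y = star y x ↔ (br x y) ^ (2 * c + 1) = 1 := by
    intro x y
    set k := br x y with hkdef
    have hkmem : k ∈ Subgroup.center G := by
      apply hnil
      have := Subgroup.commutator_mem_commutator (Subgroup.mem_top x⁻¹) (Subgroup.mem_top y⁻¹)
      rw [commutator_def]
      simpa [commutatorElement_def, mul_assoc, hkdef, hbr] using this
    have hc : ∀ g : G, g * k = k * g := fun g => (Subgroup.mem_center_iff.mp hkmem) g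
    have hyx : br y x = k⁻¹ := by rw [hbr, hkdef, hbr]; group
    have hxy : x * y = y * x * k := by
      rw [hkdef, hbr]; group
    rw [hstar, hstar, hyx, hxy, ← hkdef]
    have hck : ∀ n : ℤ, k * k ^ n = k ^ (n + 1) := by
      intro n; rw [zpow_add, zpow_one]; exact ((Commute.refl k).zpow_right n).eq
    constructor
    · intro h
      have h2 : k ^ (c + 1) = k ^ (-c) := by
        apply mul_left_cancel (a := y * x)
        calc y * x * k ^ (c + 1) = y * x * k * k ^ c := by
              rw [mul_assoc (y * x), hck, add_comm]
          _ = y * x * k⁻¹ ^ c := h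
          _ = y * x * k ^ (-c) := by rw [inv_zpow, zpow_neg]
      have := mul_right_cancel (b := k ^ c) (a := k ^ (c + 1)) (c := k ^ (-c)) ?_
      · calc k ^ (2 * c + 1) = k ^ (c + 1) * k ^ c := by
              rw [← zpow_add]; ring_nf
          _ = k ^ (-c) * k ^ c := by rw [h2]
          _ = 1 := by rw [← zpow_add]; simp
      · rw [h2]
    · intro h
      have h2 : k ^ (c + 1) = k ^ (-c) := by
        have : k ^ (2 * c + 1) * k ^ (-c) = k ^ (-c) := by rw [h]; simp
        calc k ^ (c + 1) = k ^ (2 * c + 1) * k ^ (-c) := by rw [← zpow_add]; ring_nf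
          _ = k ^ (-c) := this
      calc y * x * k * k ^ c = y * x * k ^ (c + 1) := by
            rw [mul_assoc (y * x), hck, add_comm]
        _ = y * x * k ^ (-c) := by rw [h2]
        _ = y * x * k⁻¹ ^ c := by rw [inv_zpow, zpow_neg]
  exact ⟨fun h x y => (key x y).mp (h x y), fun h x y => (key x y).mpr (h x y)⟩
end
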